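/- Let A be a finite alphabet and γ, θ > 0 real weights. Then for all words u, v ∈ A*, lev_{γ,θ}(u, v) = γ · lev_{1, min(θ/γ, 2)}(u, v). In particular, the identity map is a homothety with ratio γ from (A*, lev_{1, min(θ/γ, 2)}) to (A*, lev_{γ,θ}). -/

import Mathlib

/-- The cost structure of the (removed) Mathlib `Levenshtein.Cost`. -/
structure Levenshtein.Cost (α β δ : Type*) where
  delete : α → δ
  insert : β → δ
  substitute : α → β → δ

/-- One step of the dynamic programming computation of the (removed) Mathlib `levenshtein`. -/
def Levenshtein.impl {α β δ : Type*} [AddZeroClass δ] [Min δ] (C : Levenshtein.Cost α β δ)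
    (xs : List α) (y : β) (d : {r : List δ // 0 < r.length}) : {r : List δ // 0 < r.length} :=
  let ⟨ds, w⟩ := d
  xs.zip (ds.zip ds.tail) |>.foldr
    (init := ⟨[C.insert y + ds.getLast (List.ne_nil_of_length_pos w)], by simp⟩)
    (fun ⟨x, d₀, d₁⟩ ⟨r, w⟩ =>
      ⟨min (C.delete x + r[0]) (min (C.insert y + d₀) (C.substitute x y + d₁)) :: r, by simp⟩)

/-- Suffix Levenshtein distances, as in the (removed) Mathlib `suffixLevenshtein`. -/
def suffixLevenshtein {α β δ : Type*} [AddZeroClass δ] [Min δ] (C : Levenshtein.Cost α β δ)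
    (xs : List α) (ys : List β) : {r : List δ // 0 < r.length} :=
  ys.foldr
    (Levenshtein.impl C xs)
    (xs.foldr (init := ⟨[0], by simp⟩) (fun a ⟨r, w⟩ => ⟨(C.delete a + r[0]) :: r, by simp⟩))

/-- The Levenshtein distance, as in the (removed) Mathlib `levenshtein`. -/
def levenshtein {α β δ : Type*} [AddZeroClass δ] [Min δ] (C : Levenshtein.Cost α β δ)
    (xs : List α) (ys : List β) : δ :=
  let ⟨r, w⟩ := suffixLevenshtein C xs ys
  r[0]

/-- Cost structure for the generalized Levenshtein distance:
insertions and deletions cost `γ`, substitutions cost `θ`. -/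
def levCost (A : Type*) [DecidableEq A] (γ θ : ℝ) : Levenshtein.Cost A A ℝ where
  delete _ := γ
  insert _ := γ
  substitute a b := if a = b then 0 else θ

/-- The generalized Levenshtein distance `lev_{γ,θ}` between two words over `A`:
the minimal total cost of transforming one word into the other by insertions and
deletions (of cost `γ`) and substitutions (of cost `θ`). -/
def lev {A : Type*} [DecidableEq A] (γ θ : ℝ) (u v : List A) : ℝ :=
  levenshtein (levCost A γ θ) u v

/-- The isometry group of a language `L ⊆ A*` with respect to a distance `d` on `A*`:
the group (under composition) of bijections of `L` preserving `d`. -/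
def IsomGroup {A : Type*} (d : List A → List A → ℝ) (L : Set (List A)) :
    Subgroup (Equiv.Perm L) where
  carrier := {φ : Equiv.Perm L | ∀ u v : L, d (φ u) (φ v) = d u v}
  one_mem' := by intro u v; rfl
  mul_mem' := by intro φ ψ hφ hψ u v; simp only [Equiv.Perm.mul_apply]; rw [hφ, hψ]
  inv_mem' := by
    intro φ hφ u v
    have h := hφ (φ⁻¹ u) (φ⁻¹ v)
    simpa using h.symm

namespace Levenshtein

variable {α β δ : Type*} [AddZeroClass δ] [Min δ] {C : Levenshtein.Cost α β δ}
  {x : α} {xs : List α} {y : β} {d : δ} {ds : List δ} {w : 0 < (d :: ds).length}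

theorem impl_cons (w' : 0 < List.length ds) :
    impl C (x :: xs) y ⟨d :: ds, w⟩ =
      let ⟨r, w⟩ := impl C xs y ⟨ds, w'⟩
      ⟨min (C.delete x + r[0]) (min (C.insert y + d) (C.substitute x y + ds[0])) :: r, by simp⟩ :=
  match ds, w' with | _ :: _, _ => rfl

theorem impl_cons_fst_zero (h) (w' : 0 < List.length ds) :
    (impl C (x :: xs) y ⟨d :: ds, w⟩).1[0]'h =
      let ⟨r, w⟩ := impl C xs y ⟨ds, w'⟩
      min (C.delete x + r[0]) (min (C.insert y + d) (C.substitute x y + ds[0])) :=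
  match ds, w' with | _ :: _, _ => rfl

theorem impl_length (d : {r : List δ // 0 < r.length}) (w : d.1.length = xs.length + 1) :
    (impl C xs y d).1.length = xs.length + 1 := by
  induction xs generalizing d with
  | nil => rfl
  | cons x xs ih =>
    dsimp [impl]
    match d, w with
    | ⟨_ :: _ :: _, _⟩, w =>
      dsimp
      congr 1
      refine ih ⟨_ :: _, Nat.zero_lt_succ _⟩ ?_
      simpa using w

end Levenshtein

open Levenshtein

section LevLemmas

variable {α β δ : Type*} [AddZeroClass δ] [Min δ] (C : Levenshtein.Cost α β δ)

@[simp]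
theorem suffixLevenshtein_length (xs : List α) (ys : List β) :
    (suffixLevenshtein C xs ys).1.length = xs.length + 1 := by
  induction ys with
  | nil =>
    dsimp [suffixLevenshtein]
    induction xs with
    | nil => rfl
    | cons _ xs ih =>
      simp_all
  | cons y ys ih =>
    dsimp [suffixLevenshtein]
    rw [impl_length]
    exact ih

@[simp]
theorem levenshtein_nil_nil : levenshtein C [] [] = 0 := by
  simp [levenshtein, suffixLevenshtein]

theorem suffixLevenshtein_cons₂ (xs : List α) (y ys) :
    suffixLevenshtein C xs (y :: ys) = (impl C xs) y (suffixLevenshtein C xs ys) :=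
  rfl

@[simp]
theorem levenshtein_nil_cons (y) (ys) :
    levenshtein C [] (y :: ys) = C.insert y + levenshtein C [] ys := by
  have h := suffixLevenshtein_length C [] ys
  unfold levenshtein
  rw [suffixLevenshtein_cons₂]
  generalize suffixLevenshtein C [] ys = d at h ⊢
  obtain ⟨l, w⟩ := d
  rcases l with _ | ⟨a, _ | ⟨b, l⟩⟩
  · simp at w
  · rfl
  · simp at h

@[simp]
theorem levenshtein_cons_nil (x : α) (xs : List α) :
    levenshtein C (x :: xs) [] = C.delete x + levenshtein C xs [] :=
  rfl

theorem suffixLevenshtein_cons₁_aux {α} {xs ys : List α} (w₀ : xs ≠ []) (w₁ : ys ≠ [])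
    (w : xs.tail = ys.tail) (h : xs.head w₀ = ys.head w₁) : xs = ys := by
  match xs, ys, w₀, w₁ with
  | _ :: _, _ :: _, _, _ => simp_all

theorem suffixLevenshtein_cons₁
    (x : α) (xs ys) :
    suffixLevenshtein C (x :: xs) ys =
      ⟨levenshtein C (x :: xs) ys ::
        (suffixLevenshtein C xs ys).1, by simp⟩ := by
  induction ys with
  | nil =>
    dsimp [levenshtein, suffixLevenshtein]
    rfl
  | cons y ys ih =>
    apply Subtype.ext
    refine suffixLevenshtein_cons₁_aux
      (List.ne_nil_of_length_pos (suffixLevenshtein _ _ _).2) (by simp) ?_ ?_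
    · rw [suffixLevenshtein_cons₂ C (x :: xs), ih, impl_cons]
      · rfl
      · simp [suffixLevenshtein_length]
    · rw [List.head_eq_getElem]
      rfl

theorem suffixLevenshtein_cons_cons_fst_get_zero
    (x : α) (xs y ys) (w) :
    (suffixLevenshtein C (x :: xs) (y :: ys)).1[0]'w =
      min (C.delete x + (suffixLevenshtein C xs (y :: ys)).1[0])
        (min (C.insert y + (suffixLevenshtein C (x :: xs) ys).1[0])
          (C.substitute x y + (suffixLevenshtein C xs ys).1[0])) := by
  conv =>
    lhs
    dsimp only [suffixLevenshtein_cons₂]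
  simp only [suffixLevenshtein_cons₁]
  rw [impl_cons_fst_zero]
  rfl

theorem levenshtein_cons_cons
    (x : α) (xs : List α) (y : β) (ys : List β) :
    levenshtein C (x :: xs) (y :: ys) =
      min (C.delete x + levenshtein C xs (y :: ys))
        (min (C.insert y + levenshtein C (x :: xs) ys)
          (C.substitute x y + levenshtein C xs ys)) :=
  suffixLevenshtein_cons_cons_fst_get_zero ..

end LevLemmas

private lemma lev_insert_le {A : Type*} [DecidableEq A] (γ θ : ℝ) (u v : List A) (y : A) :
    lev γ θ u (y :: v) ≤ γ + lev γ θ u v := by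
  cases u with
  | nil => simp [lev, levCost]
  | cons x xs =>
      have := levenshtein_cons_cons (C := levCost A γ θ) x xs y v
      show levenshtein (levCost A γ θ) (x :: xs) (y :: v) ≤ _
      rw [this]
      exact le_trans (min_le_right _ _) (min_le_left _ _)

/-- For any weights `γ, θ > 0`,
`lev_{γ,θ}(u, v) = γ · lev_{1, min(θ/γ, 2)}(u, v)` for all words `u, v`; i.e. the identity
map is a homothety with ratio `γ` from `(A*, lev_{1, min(θ/γ, 2)})` to `(A*, lev_{γ,θ})`. -/
theorem stmt_2 {A : Type*} [Fintype A] [DecidableEq A] (γ θ : ℝ)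
    (hγ : 0 < γ) (hθ : 0 < θ) (u v : List A) :
    lev γ θ u v = γ * lev 1 (min (θ / γ) 2) u v := by
  have hs : γ * min (θ / γ) 2 = min θ (2 * γ) := by
    rw [mul_min_of_nonneg _ _ hγ.le, mul_div_cancel₀ _ hγ.ne']
    ring_nf
  induction u generalizing v with
  | nil =>
      induction v with
      | nil => simp [lev]
      | cons y ys ih =>
          simp only [lev, levenshtein_nil_cons, levCost] at ih ⊢
          rw [ih]; ring
  | cons x xs ihu =>
      induction v with
      | nil =>
          have h := ihu []
          simp only [lev, levenshtein_cons_nil, levCost] at h ⊢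
          rw [h]; ring
      | cons y ys ihv =>
          have hA := ihu (y :: ys)
          have hB := ihv
          have hC := ihu ys
          simp only [lev, levenshtein_cons_cons, levCost] at hA hB hC ⊢
          rw [hA, hB, hC, mul_min_of_nonneg _ _ hγ.le, mul_min_of_nonneg _ _ hγ.le,
            mul_add, mul_add, mul_add, mul_one]
          by_cases hxy : x = y
          · simp [hxy]
          · simp only [hxy, if_false, hs]
            rcases le_or_gt θ (2 * γ) with h | h
            · rw [min_eq_left h]
            · rw [min_eq_right h.le]
              have hins : γ * lev 1 (min (θ / γ) 2) xs (y :: ys) ≤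
                  γ + γ * lev 1 (min (θ / γ) 2) xs ys := by
                have := lev_insert_le 1 (min (θ / γ) 2) xs ys y
                simp only [lev] at this ⊢
                nlinarith
              simp only [lev, levCost] at hins
              have key : ∀ a b c c' : ℝ, a ≤ c → a ≤ c' →
                  min a (min b c) = min a (min b c') := by
                intro a b c c' h h'
                rw [min_comm b c, ← min_assoc, min_eq_left h,
                  min_comm b c', ← min_assoc, min_eq_left h']
              apply key
              · linarith
              · linarith
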